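/- If F is an infinite field, then the cardinality of the set of one-generated unital subrings of F equals the cardinality of F, and the cardinality of the set of one-generated (nonunital) subrings of F also equals the cardinality of F. (Consequently, since F is commutative, both the compressed and the unital compressed commuting graphs of F are complete graphs with all loops on |F| vertices.) -/

import Mathlib

open Cardinal Polynomial

section Aux

variable {F : Type*} [Field F]

/-- Membership in the unital subring generated by one element. -/
lemma aux_mem_closure_singleton {x y : F} :
    y ∈ Subring.closure {x} ↔ ∃ f : ℤ[X], aeval x f = y := by
  have h := Algebra.adjoin_int ({x} : Set F)
  constructor
  · intro hy
    have hy' : y ∈ Algebra.adjoin ℤ ({x} : Set F) := by rw [h]; exact hy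
    rw [Algebra.adjoin_singleton_eq_range_aeval] at hy'
    exact hy'
  · rintro ⟨f, rfl⟩
    have hy' : aeval x f ∈ Algebra.adjoin ℤ ({x} : Set F) := by
      rw [Algebra.adjoin_singleton_eq_range_aeval]
      exact ⟨f, rfl⟩
    rw [h] at hy'
    exact hy'

lemma aux_closure_countable (x : F) : (Subring.closure {x} : Set F).Countable := by
  haveI : Countable (AddMonoidAlgebra ℤ ℕ) :=
    Function.Injective.countable (f := AddMonoidAlgebra.coeff) AddMonoidAlgebra.coeff_injective
  haveI : Countable ℤ[X] :=
    Function.Injective.countable (f := fun f : ℤ[X] => f.toFinsupp)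
      fun a b h => Polynomial.toFinsupp_injective h
  have hsub : (Subring.closure {x} : Set F) ⊆ Set.range (fun f : ℤ[X] => aeval x f) := by
    intro y hy
    exact aux_mem_closure_singleton.mp hy
  exact (Set.countable_range _).mono hsub

lemma aux_nu_le (a : F) :
    (NonUnitalSubring.closure {a} : Set F) ⊆ (Subring.closure {a} : Set F) := by
  have : NonUnitalSubring.closure {a} ≤ (Subring.closure {a}).toNonUnitalSubring := by
    apply NonUnitalSubring.closure_le.mpr
    intro y hy
    rcases hy with rfl
    exact Subring.subset_closure rfl
  exact this

/-- If there is a sequence whose later terms escape the subrings generated by earlier terms,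
then both collections of one-generated subrings are infinite. -/
lemma aux_sets_infinite (g : ℕ → F) (hg : ∀ i j : ℕ, i < j → g j ∉ Subring.closure {g i}) :
    {S : Subring F | ∃ a : F, S = Subring.closure {a}}.Infinite ∧
    {S : NonUnitalSubring F | ∃ a : F, S = NonUnitalSubring.closure {a}}.Infinite := by
  constructor
  · refine Set.infinite_of_injective_forall_mem
      (f := fun n : ℕ => (Subring.closure {g n} : Subring F)) ?_ ?_
    · intro i j hij
      simp only at hij
      by_contra hne
      rcases lt_or_gt_of_ne hne with h | h
      · exact hg i j h (by rw [hij]; exact Subring.subset_closure rfl)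
      · exact hg j i h (by rw [← hij]; exact Subring.subset_closure rfl)
    · intro n
      exact ⟨g n, rfl⟩
  · refine Set.infinite_of_injective_forall_mem
      (f := fun n : ℕ => (NonUnitalSubring.closure {g n} : NonUnitalSubring F)) ?_ ?_
    · intro i j hij
      simp only at hij
      by_contra hne
      rcases lt_or_gt_of_ne hne with h | h
      · exact hg i j h (aux_nu_le (g i)
          (by rw [hij]; exact NonUnitalSubring.subset_closure rfl))
      · exact hg j i h (aux_nu_le (g j)
          (by rw [← hij]; exact NonUnitalSubring.subset_closure rfl))
    · intro n
      exact ⟨g n, rfl⟩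

/-- In characteristic zero, `1/q` is not in the subring generated by `1/p` for distinct
primes `p`, `q`. -/
lemma aux_char_zero [CharZero F] {p q : ℕ} (hp : p.Prime) (hq : q.Prime) (hpq : p ≠ q) :
    ((q : F))⁻¹ ∉ Subring.closure {((p : F))⁻¹} := by
  intro hmem
  obtain ⟨f, hf⟩ := aux_mem_closure_singleton.mp hmem
  set d := f.natDegree with hd
  have hp0 : (p : F) ≠ 0 := Nat.cast_ne_zero.mpr hp.pos.ne'
  have hq0 : (q : F) ≠ 0 := Nat.cast_ne_zero.mpr hq.pos.ne'
  have key : (p : F) ^ d * aeval ((p : F))⁻¹ f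
      = ((∑ i ∈ Finset.range (d + 1), f.coeff i * (p : ℤ) ^ (d - i) : ℤ) : F) := by
    rw [aeval_eq_sum_range, Finset.mul_sum]
    push_cast
    refine Finset.sum_congr rfl fun i hi => ?_
    have hi' : i ≤ d := Nat.lt_succ_iff.mp (Finset.mem_range.mp hi)
    rw [zsmul_eq_mul, pow_sub₀ (p : F) hp0 hi', inv_pow]
    ring
  rw [hf] at key
  set m : ℤ := ∑ i ∈ Finset.range (d + 1), f.coeff i * (p : ℤ) ^ (d - i) with hm
  have key2 : (p : F) ^ d = (q : F) * (m : F) := by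
    field_simp at key
    linear_combination key
  have key3 : ((p : ℤ) ^ d : ℤ) = (q * m : ℤ) := by
    have : (((p : ℤ) ^ d : ℤ) : F) = ((q * m : ℤ) : F) := by push_cast; exact key2
    exact_mod_cast this
  have hdvd : (q : ℤ) ∣ (p : ℤ) ^ d := ⟨m, key3⟩
  have hdvd' : q ∣ p ^ d := by exact_mod_cast hdvd
  have : q ∣ p := hq.dvd_of_dvd_pow hdvd'
  exact hpq ((Nat.prime_dvd_prime_iff_eq hq hp).mp this).symm

end Aux

section Cards

variable (F : Type*) [Field F] [Infinite F]

lemma aux_card_unital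
    (hinf : {S : Subring F | ∃ a : F, S = Subring.closure {a}}.Infinite) :
    #{S : Subring F | ∃ a : F, S = Subring.closure {a}} = #F := by
  set T := {S : Subring F | ∃ a : F, S = Subring.closure {a}} with hT
  refine le_antisymm ?_ ?_
  · refine Cardinal.mk_le_of_surjective
      (f := fun a : F => (⟨Subring.closure {a}, a, rfl⟩ : T)) ?_
    rintro ⟨S, a, rfl⟩
    exact ⟨a, rfl⟩
  · have hcover : (Set.univ : Set F) ⊆ ⋃ S : T, ((S : Subring F) : Set F) := by
      intro a _
      exact Set.mem_iUnion.mpr ⟨⟨Subring.closure {a}, a, rfl⟩, Subring.subset_closure rfl⟩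
    have h1 : #F ≤ #(⋃ S : T, ((S : Subring F) : Set F)) := by
      have := Cardinal.mk_le_mk_of_subset hcover
      rwa [Cardinal.mk_univ] at this
    haveI : Nonempty T := hinf.nonempty.to_subtype
    have h2 : #(⋃ S : T, ((S : Subring F) : Set F)) ≤ #T * ℵ₀ := by
      refine (Cardinal.mk_iUnion_le _).trans ?_
      gcongr
      refine ciSup_le fun S => ?_
      obtain ⟨a, ha⟩ := S.2
      rw [Cardinal.mk_le_aleph0_iff, Set.countable_coe_iff]
      rw [show ((S : Subring F) : Set F) = (Subring.closure {a} : Set F) by rw [ha]]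
      exact aux_closure_countable a
    haveI := hinf.to_subtype
    have hTinf : ℵ₀ ≤ #T := Cardinal.infinite_iff.mp inferInstance
    calc #F ≤ #T * ℵ₀ := h1.trans h2
      _ = #T := Cardinal.mul_eq_left hTinf hTinf Cardinal.aleph0_ne_zero

lemma aux_card_nonunital
    (hinf : {S : NonUnitalSubring F | ∃ a : F, S = NonUnitalSubring.closure {a}}.Infinite) :
    #{S : NonUnitalSubring F | ∃ a : F, S = NonUnitalSubring.closure {a}} = #F := by
  set T := {S : NonUnitalSubring F | ∃ a : F, S = NonUnitalSubring.closure {a}} with hT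
  refine le_antisymm ?_ ?_
  · refine Cardinal.mk_le_of_surjective
      (f := fun a : F => (⟨NonUnitalSubring.closure {a}, a, rfl⟩ : T)) ?_
    rintro ⟨S, a, rfl⟩
    exact ⟨a, rfl⟩
  · have hcover : (Set.univ : Set F) ⊆ ⋃ S : T, ((S : NonUnitalSubring F) : Set F) := by
      intro a _
      exact Set.mem_iUnion.mpr
        ⟨⟨NonUnitalSubring.closure {a}, a, rfl⟩, NonUnitalSubring.subset_closure rfl⟩
    have h1 : #F ≤ #(⋃ S : T, ((S : NonUnitalSubring F) : Set F)) := by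
      have := Cardinal.mk_le_mk_of_subset hcover
      rwa [Cardinal.mk_univ] at this
    haveI : Nonempty T := hinf.nonempty.to_subtype
    have h2 : #(⋃ S : T, ((S : NonUnitalSubring F) : Set F)) ≤ #T * ℵ₀ := by
      refine (Cardinal.mk_iUnion_le _).trans ?_
      gcongr
      refine ciSup_le fun S => ?_
      obtain ⟨a, ha⟩ := S.2
      rw [Cardinal.mk_le_aleph0_iff, Set.countable_coe_iff]
      rw [show ((S : NonUnitalSubring F) : Set F) = (NonUnitalSubring.closure {a} : Set F) by
        rw [ha]]
      exact ((aux_closure_countable a).mono (aux_nu_le a))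
    haveI := hinf.to_subtype
    have hTinf : ℵ₀ ≤ #T := Cardinal.infinite_iff.mp inferInstance
    calc #F ≤ #T * ℵ₀ := h1.trans h2
      _ = #T := Cardinal.mul_eq_left hTinf hTinf Cardinal.aleph0_ne_zero

end Cards

section CharPCase

variable {F : Type*} [Field F]

/-- In characteristic `p`, powers of a transcendental element with non-dividing exponents
escape each other's generated subrings. -/
lemma aux_transcendental {p : ℕ} [Fact p.Prime] [CharP F p]
    (alg : Algebra (ZMod p) F) (t : F) (ht : ¬ @IsAlgebraic (ZMod p) _ _ _ alg t)
    {m n : ℕ} (hn : 0 < n) (hnm : ¬ n ∣ m) :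
    t ^ m ∉ Subring.closure {t ^ n} := by
  letI := alg
  haveI : IsScalarTower ℤ (ZMod p) F := IsScalarTower.of_algebraMap_eq fun c => by
    rw [algebraMap_int_eq, eq_intCast, eq_intCast, map_intCast]
  intro hmem
  obtain ⟨f, hf⟩ := aux_mem_closure_singleton.mp hmem
  set f' : (ZMod p)[X] := f.map (Int.castRingHom (ZMod p)) with hf'
  have hev : aeval (t ^ n) f' = t ^ m := by
    rw [hf', show Int.castRingHom (ZMod p) = algebraMap ℤ (ZMod p) from rfl,
      aeval_map_algebraMap]
    exact hf
  set g : (ZMod p)[X] := expand (ZMod p) n f' - X ^ m with hg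
  have hg0 : aeval t g = 0 := by
    rw [hg, map_sub, expand_aeval, hev, map_pow, aeval_X, sub_self]
  have hgne : g ≠ 0 := by
    intro h
    have : g.coeff m = 0 := by rw [h, coeff_zero]
    rw [hg, coeff_sub, coeff_expand hn, if_neg hnm, coeff_X_pow, if_pos rfl, zero_sub,
      neg_eq_zero] at this
    exact one_ne_zero this
  exact ht ⟨g, hgne, hg0⟩

end CharPCase

/-- For an infinite field `F`, both the number of one-generated unital subrings and
the number of one-generated (nonunital) subrings equal the cardinality of `F`. -/
theorem stmt_9 (F : Type*) [Field F] [Infinite F] :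
    #{S : Subring F | ∃ a : F, S = Subring.closure {a}} = #F ∧
    #{S : NonUnitalSubring F | ∃ a : F, S = NonUnitalSubring.closure {a}} = #F := by
  have hInf : {S : Subring F | ∃ a : F, S = Subring.closure {a}}.Infinite ∧
      {S : NonUnitalSubring F | ∃ a : F, S = NonUnitalSubring.closure {a}}.Infinite := by
    obtain ⟨p, hp⟩ := CharP.exists F
    rcases CharP.char_is_prime_or_zero F p with hpp | rfl
    · -- characteristic p > 0
      haveI : Fact p.Prime := ⟨hpp⟩
      letI alg : Algebra (ZMod p) F := ZMod.algebra F p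
      by_cases halg : ∀ x : F, IsAlgebraic (ZMod p) x
      · -- every element is algebraic over the prime field: every one-generated subring is finite
        have hfin : ∀ a : F, (Subring.closure {a} : Set F).Finite := by
          intro a
          have hint : IsIntegral (ZMod p) a := (halg a).isIntegral
          haveI : Module.Finite (ZMod p) (Algebra.adjoin (ZMod p) ({a} : Set F)) :=
            ⟨(Submodule.fg_top _).mpr hint.fg_adjoin_singleton⟩
          have hfinset : ((Algebra.adjoin (ZMod p) ({a} : Set F) : Subalgebra (ZMod p) F) :
              Set F).Finite := by
            rw [← Set.finite_coe_iff]
            exact Module.finite_of_finite (ZMod p)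
          refine hfinset.subset ?_
          intro y hy
          have hle : Subring.closure {a} ≤ (Algebra.adjoin (ZMod p) ({a} : Set F)).toSubring :=
            Subring.closure_le.mpr (Set.singleton_subset_iff.mpr (Algebra.subset_adjoin rfl))
          exact hle hy
        constructor
        · by_contra h
          rw [Set.not_infinite] at h
          have : (Set.univ : Set F).Finite := by
            refine Set.Finite.subset
              (Set.Finite.biUnion (t := fun S : Subring F => (S : Set F)) h
                fun S hS => ?_) ?_
            · obtain ⟨a, ha⟩ := hS
              exact ha ▸ hfin a
            · intro a _
              exact Set.mem_biUnion ⟨a, rfl⟩ (Subring.subset_closure rfl)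
          exact Set.infinite_univ this
        · by_contra h
          rw [Set.not_infinite] at h
          have : (Set.univ : Set F).Finite := by
            refine Set.Finite.subset
              (Set.Finite.biUnion (t := fun S : NonUnitalSubring F => (S : Set F)) h
                fun S hS => ?_) ?_
            · obtain ⟨a, ha⟩ := hS
              exact ha ▸ (hfin a).subset (aux_nu_le a)
            · intro a _
              exact Set.mem_biUnion ⟨a, rfl⟩ (NonUnitalSubring.subset_closure rfl)
          exact Set.infinite_univ this
      · -- some element is transcendental over the prime field
        push_neg at halg
        obtain ⟨t, ht⟩ := halg
        refine aux_sets_infinite (fun k => t ^ (Nat.nth Nat.Prime k)) fun i j hij => ?_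
        have hpi : (Nat.nth Nat.Prime i).Prime := Nat.nth_mem_of_infinite
          Nat.infinite_setOf_prime i
        have hpj : (Nat.nth Nat.Prime j).Prime := Nat.nth_mem_of_infinite
          Nat.infinite_setOf_prime j
        have hij' : Nat.nth Nat.Prime i ≠ Nat.nth Nat.Prime j :=
          fun h => hij.ne (Nat.nth_injective Nat.infinite_setOf_prime h)
        exact aux_transcendental alg t ht hpi.pos
          (fun h => hij' ((Nat.prime_dvd_prime_iff_eq hpi hpj).mp h))
    · -- characteristic zero
      haveI : CharZero F := CharP.charP_to_charZero F
      refine aux_sets_infinite (fun k => ((Nat.nth Nat.Prime k : ℕ) : F)⁻¹) fun i j hij => ?_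
      have hpi : (Nat.nth Nat.Prime i).Prime := Nat.nth_mem_of_infinite
        Nat.infinite_setOf_prime i
      have hpj : (Nat.nth Nat.Prime j).Prime := Nat.nth_mem_of_infinite
        Nat.infinite_setOf_prime j
      have hij' : Nat.nth Nat.Prime i ≠ Nat.nth Nat.Prime j :=
        fun h => hij.ne (Nat.nth_injective Nat.infinite_setOf_prime h)
      exact aux_char_zero hpi hpj hij'
  exact ⟨aux_card_unital F hInf.1, aux_card_nonunital F hInf.2⟩
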